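/- There exist 15 points p_1, …, p_15 in the unit square [0,1]^2 such that for every triple 1 ≤ i < j < k ≤ 15, the area of the triangle with vertices p_i, p_j, p_k, namely (1/2)·|det(p_j − p_i, p_k − p_i)|, is at least 0.0187493936. -/
import Mathlib

private def hA : Fin 15 → ℤ :=
  ![117379, 685622, 0, 0, 411892, 361687, 999205, 656157, 734731, 55901,
    885519, 96934, 887554, 1000000, 345167]

private def hB : Fin 15 → ℤ :=
  ![556574, 1000000, 191905, 894413, 445619, 182594, 356150, 484792, 45, 0,
    56975, 1000000, 932498, 698122, 865689]

private lemma hBounds : ∀ i : Fin 15,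
    0 ≤ hA i ∧ hA i ≤ 1000000 ∧ 0 ≤ hB i ∧ hB i ≤ 1000000 := by decide

private lemma hKey : ∀ i j k : Fin 15, i < j → j < k →
    (37498787200 : ℤ) ≤ |(hA j - hA i) * (hB k - hB i) - (hB j - hB i) * (hA k - hA i)| := by
  decide

/-- Heilbronn configuration of 15 points with minimum triangle area at least 0.0187493936. -/
theorem heilbronn_15 : ∃ p : Fin 15 → ℝ × ℝ,
    (∀ i, (p i).1 ∈ Set.Icc (0:ℝ) 1 ∧ (p i).2 ∈ Set.Icc (0:ℝ) 1) ∧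
    ∀ i j k : Fin 15, i < j → j < k →
      (0.0187493936 : ℝ) ≤ (1/2) * |((p j).1 - (p i).1) * ((p k).2 - (p i).2)
        - ((p j).2 - (p i).2) * ((p k).1 - (p i).1)| := by
  refine ⟨fun i => ((hA i : ℝ) / 1000000, (hB i : ℝ) / 1000000), ?_, ?_⟩
  · intro i
    obtain ⟨h1, h2, h3, h4⟩ := hBounds i
    have h1' : (0:ℝ) ≤ (hA i : ℝ) := by exact_mod_cast h1
    have h2' : (hA i : ℝ) ≤ 1000000 := by exact_mod_cast h2
    have h3' : (0:ℝ) ≤ (hB i : ℝ) := by exact_mod_cast h3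
    have h4' : (hB i : ℝ) ≤ 1000000 := by exact_mod_cast h4
    constructor <;> constructor <;> simp only [Set.mem_Icc] <;>
      first
        | positivity
        | (rw [div_le_one (by norm_num)]; linarith)
  · intro i j k hij hjk
    have h := hKey i j k hij hjk
    have h' : (37498787200 : ℝ) ≤
        |(((hA j - hA i) * (hB k - hB i) - (hB j - hB i) * (hA k - hA i) : ℤ) : ℝ)| := by
      rw [← Int.cast_abs]; exact_mod_cast h
    have heq : ((hA j : ℝ)/1000000 - (hA i : ℝ)/1000000) * ((hB k : ℝ)/1000000 - (hB i : ℝ)/1000000)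
        - ((hB j : ℝ)/1000000 - (hB i : ℝ)/1000000) * ((hA k : ℝ)/1000000 - (hA i : ℝ)/1000000)
        = (((hA j - hA i) * (hB k - hB i) - (hB j - hB i) * (hA k - hA i) : ℤ) : ℝ) / 1000000000000 := by
      push_cast; ring
    simp only [heq, abs_div, abs_of_nonneg (show (0:ℝ) ≤ 1000000000000 by norm_num)]
    rw [show (0.0187493936:ℝ) = 37498787200 / 2 / 1000000000000 by norm_num]
    linarith [h']
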